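/- Let f be analytic on the unit disc D satisfying, for all z ∈ D, the lower growth bound |f(z)| ≥ 2|z|/((1+c)(1+|z|)²) for a constant c > 0, and suppose f is an open map with f(0) = 0. Then the open disc {w : |w| < 1/(2(1+c))} is contained in f(D). -/

import Mathlib

theorem koebe_domain_from_lower_bound (c : ℝ) (hc : 0 < c) (f : ℂ → ℂ)
    (hfa : AnalyticOn ℂ f (Metric.ball (0:ℂ) 1))
    (hlow : ∀ z ∈ Metric.ball (0:ℂ) 1,
      2 * ‖z‖ / ((1 + c) * (1 + ‖z‖)^2) ≤ ‖f z‖)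
    (hopen : ∀ U ⊆ Metric.ball (0:ℂ) 1, IsOpen U → IsOpen (f '' U))
    (hf0 : f 0 = 0) :
    Metric.ball (0:ℂ) (1 / (2 * (1 + c))) ⊆ f '' Metric.ball (0:ℂ) 1 := by
  have hc1 : (0:ℝ) < 1 + c := by linarith
  set R : ℝ := 1 / (2 * (1 + c)) with hR
  have hRpos : 0 < R := by positivity
  set F : ℝ → ℝ := fun r => 2 * r / ((1 + c) * (1 + r) ^ 2) with hF
  have hFmono : ∀ a b : ℝ, 0 ≤ a → a ≤ b → b ≤ 1 → F a ≤ F b := by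
    intro a b ha hab hb1
    have hda : (0:ℝ) < (1 + c) * (1 + a) ^ 2 := by positivity
    have hdb : (0:ℝ) < (1 + c) * (1 + b) ^ 2 := by nlinarith
    rw [hF]
    simp only
    rw [div_le_div_iff₀ hda hdb]
    have hab1 : a * b ≤ 1 := by nlinarith
    nlinarith [mul_nonneg (mul_nonneg hc1.le (sub_nonneg.2 hab)) (sub_nonneg.2 hab1)]
  have hcont : ContinuousOn f (Metric.ball (0:ℂ) 1) := hfa.continuousOn
  set S := f '' Metric.ball (0:ℂ) 1 with hS
  have key : ∀ w ∈ Metric.ball (0:ℂ) R, w ∈ closure S → w ∈ S := by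
    intro w hw hwc
    have hwR : ‖w‖ < R := by
      simpa [Complex.norm_def] using mem_ball_zero_iff.mp hw
    -- choose s < 1 with |w| < F s
    have hFc : ContinuousAt F 1 := by
      apply ContinuousAt.div
      · fun_prop
      · fun_prop
      · positivity
    have hF1 : F 1 = R := by
      rw [hF, hR]; norm_num; field_simp; ring
    have htd : Filter.Tendsto F (nhdsWithin (1:ℝ) (Set.Iio 1)) (nhds (F 1)) :=
      hFc.continuousWithinAt.tendsto
    have h1 : ∀ᶠ r in nhdsWithin (1:ℝ) (Set.Iio 1), ‖w‖ < F r :=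
      htd.eventually_const_lt (hF1 ▸ hwR)
    have h2 : ∀ᶠ r in nhdsWithin (1:ℝ) (Set.Iio 1), 0 < r :=
      Filter.Eventually.filter_mono nhdsWithin_le_nhds
        (eventually_gt_nhds (by norm_num))
    have h3 : ∀ᶠ r in nhdsWithin (1:ℝ) (Set.Iio 1), r < 1 :=
      eventually_mem_nhdsWithin
    obtain ⟨s, hws, hs0, hs1⟩ := (h1.and (h2.and h3)).exists
    -- points of S with small abs come from closedBall 0 s
    have hsub : Metric.closedBall (0:ℂ) s ⊆ Metric.ball (0:ℂ) 1 :=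
      Metric.closedBall_subset_ball hs1
    have hincl : Metric.ball (0:ℂ) (F s) ∩ S ⊆ f '' Metric.closedBall (0:ℂ) s := by
      rintro v ⟨hv, z, hz, rfl⟩
      refine ⟨z, ?_, rfl⟩
      rw [Metric.mem_closedBall, dist_zero_right]
      by_contra hzs
      push_neg at hzs
      have hz1 : ‖z‖ < 1 := by
        simpa [Complex.norm_def] using mem_ball_zero_iff.mp hz
      have h4 : F s ≤ F (‖z‖) := hFmono s (‖z‖) hs0.le
        (by simpa [Complex.norm_def] using hzs.le) hz1.le
      have h5 : F (‖z‖) ≤ ‖f z‖ := hlow z hz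
      have h6 : ‖f z‖ < F s := by
        simpa [Complex.norm_def] using mem_ball_zero_iff.mp hv
      linarith
    -- w ∈ closure of compact image
    have hwc2 : w ∈ closure (f '' Metric.closedBall (0:ℂ) s) := by
      rw [mem_closure_iff] at hwc ⊢
      intro U hU hwU
      have hwV : w ∈ U ∩ Metric.ball (0:ℂ) (F s) :=
        ⟨hwU, by rw [mem_ball_zero_iff]; simpa [Complex.norm_def] using hws⟩
      obtain ⟨v, ⟨hvU, hvV⟩, hvS⟩ := hwc (U ∩ Metric.ball (0:ℂ) (F s))
        (hU.inter Metric.isOpen_ball) hwV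
      exact ⟨v, hvU, hincl ⟨hvV, hvS⟩⟩
    have hcomp : IsCompact (f '' Metric.closedBall (0:ℂ) s) :=
      (isCompact_closedBall (0:ℂ) s).image_of_continuousOn (hcont.mono hsub)
    rw [hcomp.isClosed.closure_eq] at hwc2
    exact Set.image_mono hsub hwc2
  -- connectedness argument
  have hSopen : IsOpen S := hopen _ subset_rfl Metric.isOpen_ball
  have h0S : (0:ℂ) ∈ S := ⟨0, by simp, hf0⟩
  have hpre : IsPreconnected (Metric.ball (0:ℂ) R) := (convex_ball (0:ℂ) R).isPreconnected
  have := hpre.subset_left_of_subset_union hSopen (isClosed_closure.isOpen_compl)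
    (Set.disjoint_left.mpr fun x hx hx' => hx' (subset_closure hx))
    (fun w hw => by
      by_cases h : w ∈ closure S
      · exact Or.inl (key w hw h)
      · exact Or.inr h)
    ⟨0, Metric.mem_ball_self hRpos, h0S⟩
  exact this
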